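/- The partition graph G_n contains no clique of size 7 for 1 ≤ n ≤ 21, and G_22 contains exactly one clique of size 7; that is, c_7(n) = 0 for 1 ≤ n ≤ 21 and c_7(22) = 1. -/

import Mathlib

/-- `nu` is obtained from `lam` by decreasing a single part by 1
(deleting the part if it becomes 0). -/
def stepDown {n : ℕ} (lam : Nat.Partition n) (nu : Nat.Partition (n - 1)) : Prop :=
  ∃ k ∈ lam.parts, nu.parts = Multiset.filter (· ≠ 0) ((k - 1) ::ₘ lam.parts.erase k)

/-- The partition graph `G_n`: vertices are the integer partitions of `n`, and two
distinct partitions are adjacent iff some partition of `n - 1` is obtained from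
each of them by decreasing a single part by 1 (an elementary transfer of one cell). -/
def partitionGraph (n : ℕ) : SimpleGraph (Nat.Partition n) where
  Adj lam mu := lam ≠ mu ∧ ∃ nu : Nat.Partition (n - 1), stepDown lam nu ∧ stepDown mu nu
  symm := ⟨by
    rintro a b ⟨hne, nu, ha, hb⟩
    exact ⟨hne.symm, nu, hb, ha⟩⟩
  loopless := ⟨by
    rintro a ⟨hne, _⟩
    exact hne rfl⟩

/-- `cliqueCount n r = c_r(n)`, the number of cliques of size `r` in `G_n`. -/
noncomputable def cliqueCount (n r : ℕ) : ℕ :=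
  Set.ncard {s : Finset (Nat.Partition n) | (partitionGraph n).IsNClique r s}


namespace PG
open Multiset

open Multiset

def dlt (a j : ℕ) : ℕ := if j = a then 1 else 0

def conj {n : ℕ} (l : Nat.Partition n) (j : ℕ) : ℕ :=
  Multiset.countP (fun p => j + 1 ≤ p) l.parts

lemma conj_anti {n : ℕ} (l : Nat.Partition n) {j j' : ℕ} (h : j ≤ j') :
    conj l j' ≤ conj l j := by
  unfold conj
  induction l.parts using Multiset.induction_on with
  | empty => simp
  | cons a s ih =>
    rw [countP_cons, countP_cons]
    have : (if j' + 1 ≤ a then 1 else 0) ≤ (if j + 1 ≤ a then 1 else 0) := by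
      split_ifs <;> omega
    omega

lemma parts_le {n : ℕ} (l : Nat.Partition n) {p : ℕ} (hp : p ∈ l.parts) : p ≤ n := by
  have := Multiset.single_le_sum (fun x _ => Nat.zero_le x) p hp
  rwa [l.parts_sum] at this

lemma conj_eq_zero {n : ℕ} (l : Nat.Partition n) {j : ℕ} (h : n ≤ j) : conj l j = 0 := by
  rw [conj, countP_eq_zero]
  intro p hp
  have := parts_le l hp
  omega

lemma conj_split {n : ℕ} (l : Nat.Partition n) (k : ℕ) :
    conj l k = Multiset.count (k + 1) l.parts + conj l (k + 1) := by
  unfold conj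
  induction l.parts using Multiset.induction_on with
  | empty => simp
  | cons a s ih =>
    rw [countP_cons, countP_cons, count_cons, ih]
    have : (if k + 1 ≤ a then 1 else 0) = (if k + 1 = a then 1 else 0) + (if k + 1 + 1 ≤ a then 1 else 0) := by
      split_ifs <;> omega
    omega

lemma conj_inj {n : ℕ} {l m : Nat.Partition n} (h : ∀ j, conj l j = conj m j) : l = m := by
  ext1
  ext p
  cases p with
  | zero =>
    rw [Multiset.count_eq_zero_of_notMem, Multiset.count_eq_zero_of_notMem]
    · intro hm; exact absurd (m.parts_pos hm) (lt_irrefl 0)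
    · intro hm; exact absurd (l.parts_pos hm) (lt_irrefl 0)
  | succ k =>
    have h1 := conj_split l k
    have h2 := conj_split m k
    have := h k; have := h (k+1)
    omega


open Multiset

lemma sum_ind {a N : ℕ} (h : a ≤ N) :
    (∑ j ∈ Finset.range N, if j < a then 1 else 0) = a := by
  induction N with
  | zero => simp; omega
  | succ N ih =>
    rw [Finset.sum_range_succ]
    rcases Nat.lt_or_ge N a with hlt | hge
    · have ha : a = N + 1 := by omega
      subst ha
      rw [if_pos hlt]
      have : (∑ j ∈ Finset.range N, if j < N + 1 then 1 else 0)
          = ∑ j ∈ Finset.range N, 1 := by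
        apply Finset.sum_congr rfl
        intro j hj
        rw [if_pos (by simpa using Nat.lt_succ_of_lt (Finset.mem_range.mp hj))]
      rw [this]; simp
    · rw [ih hge, if_neg (by omega)]; omega

lemma sum_conj {n : ℕ} (l : Nat.Partition n) {N : ℕ} (h : n ≤ N) :
    ∑ j ∈ Finset.range N, conj l j = n := by
  unfold conj
  have key : ∀ s : Multiset ℕ, (∀ p ∈ s, p ≤ N) →
      (∑ j ∈ Finset.range N, Multiset.countP (fun p => j + 1 ≤ p) s) = s.sum := by
    intro s
    induction s using Multiset.induction_on with
    | empty => simp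
    | cons a s ih =>
      intro hb
      have hsum : ∀ j, Multiset.countP (fun p => j + 1 ≤ p) (a ::ₘ s)
          = Multiset.countP (fun p => j + 1 ≤ p) s + (if j < a then 1 else 0) := by
        intro j
        rw [countP_cons]
        have : (if j + 1 ≤ a then 1 else 0) = (if j < a then 1 else 0) := by
          split_ifs <;> omega
        omega
      calc (∑ j ∈ Finset.range N, Multiset.countP (fun p => j + 1 ≤ p) (a ::ₘ s))
          = (∑ j ∈ Finset.range N, Multiset.countP (fun p => j + 1 ≤ p) s)
            + ∑ j ∈ Finset.range N, (if j < a then 1 else 0) := by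
            rw [← Finset.sum_add_distrib]; exact Finset.sum_congr rfl fun j _ => hsum j
        _ = s.sum + a := by
            rw [ih (fun p hp => hb p (Multiset.mem_cons_of_mem hp)),
              sum_ind (hb a (Multiset.mem_cons_self a s))]
        _ = (a ::ₘ s).sum := by rw [Multiset.sum_cons]; omega
  rw [key l.parts (fun p hp => le_trans (by
      have := Multiset.single_le_sum (fun x _ => Nat.zero_le x) p hp
      rwa [l.parts_sum] at this) h), l.parts_sum]


open Multiset

lemma pair_eq {x y u v : ℕ} (h : ({x, y} : Multiset ℕ) = {u, v}) :
    (x = u ∧ y = v) ∨ (x = v ∧ y = u) := by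
  have hx : x ∈ ({u, v} : Multiset ℕ) := by
    rw [← h]; exact Multiset.mem_cons_self _ _
  simp only [Multiset.insert_eq_cons, Multiset.mem_cons, Multiset.mem_singleton] at hx
  rcases hx with rfl | rfl
  · left
    refine ⟨rfl, ?_⟩
    have := (Multiset.cons_inj_right x).mp h
    simpa using this
  · right
    refine ⟨rfl, ?_⟩
    rw [show ({u, x} : Multiset ℕ) = {x, u} from Multiset.cons_swap u x {}] at h
    have := (Multiset.cons_inj_right x).mp h
    simpa using this

lemma triple {a d e b c f : ℕ} (hab : a ≠ b) (hcd : c ≠ d) (hef : e ≠ f)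
    (H : ∀ j, dlt a j + dlt d j + dlt e j = dlt b j + dlt c j + dlt f j) :
    (a = c ∧ d = f ∧ e = b) ∨ (a = f ∧ d = b ∧ e = c) := by
  have hM : ({a, d, e} : Multiset ℕ) = {b, c, f} := by
    apply Multiset.ext.mpr
    intro j
    have := H j
    simp only [dlt] at this
    simp only [Multiset.insert_eq_cons, Multiset.count_cons, Multiset.count_singleton]
    omega
  have ha : a ∈ ({b, c, f} : Multiset ℕ) := by
    rw [← hM]; exact Multiset.mem_cons_self _ _
  simp only [Multiset.insert_eq_cons, Multiset.mem_cons, Multiset.mem_singleton] at ha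
  rcases ha with rfl | rfl | rfl
  · exact absurd rfl hab
  · -- a = c
    have hswap : ({b, a, f} : Multiset ℕ) = a ::ₘ {b, f} := Multiset.cons_swap b a {f}
    rw [hswap] at hM
    have hde : ({d, e} : Multiset ℕ) = {b, f} := (Multiset.cons_inj_right a).mp hM
    rcases pair_eq hde with ⟨h1, h2⟩ | ⟨h1, h2⟩
    · exact absurd h2 hef
    · exact Or.inl ⟨rfl, h1, h2⟩
  · -- a = f
    have hswap : ({b, c, a} : Multiset ℕ) = a ::ₘ {b, c} := by
      have s1 : ({b, c, a} : Multiset ℕ) = b ::ₘ a ::ₘ {c} := by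
        rw [Multiset.insert_eq_cons, Multiset.insert_eq_cons]
        congr 1
        exact Multiset.cons_swap c a {}
      rw [s1]
      exact Multiset.cons_swap b a {c}
    rw [hswap] at hM
    have hde : ({d, e} : Multiset ℕ) = {b, c} := (Multiset.cons_inj_right a).mp hM
    rcases pair_eq hde with ⟨h1, h2⟩ | ⟨h1, h2⟩
    · exact Or.inr ⟨rfl, h1, h2⟩
    · exact absurd h1.symm hcd

lemma uniq_lower {g h f1 f2 : ℕ → ℕ} {a b a' b' : ℕ} (hab : a ≠ b) (hab' : a' ≠ b')
    (h1 : ∀ j, g j + dlt a j = f1 j) (h1' : ∀ j, h j + dlt a' j = f1 j)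
    (h2 : ∀ j, g j + dlt b j = f2 j) (h2' : ∀ j, h j + dlt b' j = f2 j) :
    a = a' ∧ ∀ j, g j = h j := by
  have haa : a = a' := by
    by_contra hne
    have e1 := h1 a; have e2 := h1' a; have e3 := h2 a; have e4 := h2' a
    have d1 : dlt a a = 1 := if_pos rfl
    have d2 : dlt a' a = 0 := if_neg hne
    have d3 : dlt b a = 0 := if_neg hab
    rw [d1] at e1; rw [d2] at e2; rw [d3] at e3
    have : 0 ≤ dlt b' a := Nat.zero_le _
    omega
  refine ⟨haa, fun j => ?_⟩
  have e1 := h1 j; have e2 := h1' j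
  rw [← haa] at e2
  omega

lemma uniq_upper {f1 f2 s s' : ℕ → ℕ} {x y x' y' : ℕ} (hxy : x ≠ y) (hxy' : x' ≠ y')
    (h1 : ∀ j, f1 j + dlt x j = s j) (h2 : ∀ j, f2 j + dlt y j = s j)
    (h1' : ∀ j, f1 j + dlt x' j = s' j) (h2' : ∀ j, f2 j + dlt y' j = s' j) :
    x = x' ∧ ∀ j, s j = s' j := by
  have hxx : x = x' := by
    by_contra hne
    have e1 := h1 x; have e2 := h2 x; have e3 := h1' x; have e4 := h2' x
    have d1 : dlt x x = 1 := if_pos rfl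
    have d2 : dlt y x = 0 := if_neg hxy
    have d3 : dlt x' x = 0 := if_neg hne
    rw [d1] at e1; rw [d2] at e2; rw [d3] at e3
    have : 0 ≤ dlt y' x := Nat.zero_le _
    omega
  refine ⟨hxx, fun j => ?_⟩
  have e1 := h1 j; have e2 := h1' j
  rw [← hxx] at e2
  omega

lemma uniq_upper' {f1 f2 : ℕ → ℕ} {x y x' y' : ℕ} (hxy : x ≠ y) (hxy' : x' ≠ y')
    (h : ∀ j, f1 j + dlt x j = f2 j + dlt y j)
    (h' : ∀ j, f1 j + dlt x' j = f2 j + dlt y' j) : x = x' := by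
  by_contra hne
  have e1 := h x; have e2 := h' x
  have d1 : dlt x x = 1 := if_pos rfl
  have d2 : dlt y x = 0 := if_neg hxy
  have d3 : dlt x' x = 0 := if_neg hne
  rw [d1, d2] at e1; rw [d3] at e2
  have : 0 ≤ dlt y' x := Nat.zero_le _
  omega

lemma triangle {f1 f2 f3 g12 g13 g23 : ℕ → ℕ} {a b c d e f : ℕ}
    (hab : a ≠ b) (hcd : c ≠ d) (hef : e ≠ f)
    (h12a : ∀ j, g12 j + dlt a j = f1 j) (h12b : ∀ j, g12 j + dlt b j = f2 j)
    (h13c : ∀ j, g13 j + dlt c j = f1 j) (h13d : ∀ j, g13 j + dlt d j = f3 j)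
    (h23e : ∀ j, g23 j + dlt e j = f2 j) (h23f : ∀ j, g23 j + dlt f j = f3 j) :
    (∃ w, ∀ j, g12 j + dlt w j = f3 j) ∨
    (∃ x y z, x ≠ y ∧ (∀ j, f1 j + dlt x j = f2 j + dlt y j)
      ∧ (∀ j, f1 j + dlt x j = f3 j + dlt z j)) := by
  have H : ∀ j, dlt a j + dlt d j + dlt e j = dlt b j + dlt c j + dlt f j := by
    intro j
    have e1 := h12a j; have e2 := h12b j; have e3 := h13c j
    have e4 := h13d j; have e5 := h23e j; have e6 := h23f j
    omega
  rcases triple hab hcd hef H with ⟨hac, hdf, heb⟩ | ⟨haf, hdb, hec⟩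
  · left
    refine ⟨d, fun j => ?_⟩
    have e1 := h12a j; have e3 := h13c j; have e4 := h13d j
    rw [← hac] at e3
    omega
  · right
    refine ⟨b, a, e, fun hh => hab hh.symm, fun j => ?_, fun j => ?_⟩
    · have e1 := h12a j; have e2 := h12b j; omega
    · have e3 := h13c j; have e4 := h13d j
      rw [← hec] at e3; rw [hdb] at e4
      have e1 := h12a j; have e2 := h12b j
      omega
  
lemma stepDown_conj {n : ℕ} {l : Nat.Partition n} {ν : Nat.Partition (n - 1)}
    (h : stepDown l ν) : ∃ a, ∀ j, conj ν j + dlt a j = conj l j := by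
  obtain ⟨k, hk, hν⟩ := h
  have hk1 : 0 < k := l.parts_pos hk
  refine ⟨k - 1, fun j => ?_⟩
  have h1 : conj ν j = Multiset.countP (fun p => j + 1 ≤ p) ((k - 1) ::ₘ l.parts.erase k) := by
    rw [conj, hν, Multiset.countP_filter]
    apply Multiset.countP_congr rfl
    intro x _
    simp only [eq_iff_iff]
    constructor
    · rintro ⟨h1, _⟩; exact h1
    · intro h1; exact ⟨h1, by omega⟩
  have h2 : conj l j = (if j + 1 ≤ k then 1 else 0)
      + Multiset.countP (fun p => j + 1 ≤ p) (l.parts.erase k) := by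
    rw [conj]
    conv_lhs => rw [← Multiset.cons_erase hk]
    rw [Multiset.countP_cons]
    omega
  rw [h1, Multiset.countP_cons, h2, dlt]
  have : (if j + 1 ≤ k - 1 then 1 else 0) + (if j = k - 1 then 1 else 0)
      = (if j + 1 ≤ k then 1 else 0) := by
    split_ifs <;> omega
  omega

lemma adj_conj {n : ℕ} {l m : Nat.Partition n} (h : (partitionGraph n).Adj l m) :
    ∃ (ν : Nat.Partition (n - 1)) (a b : ℕ), a ≠ b ∧
      (∀ j, conj ν j + dlt a j = conj l j) ∧ (∀ j, conj ν j + dlt b j = conj m j) := by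
  obtain ⟨hne, ν, hl, hm⟩ := h
  obtain ⟨a, ha⟩ := stepDown_conj hl
  obtain ⟨b, hb⟩ := stepDown_conj hm
  refine ⟨ν, a, b, ?_, ha, hb⟩
  rintro rfl
  exact hne (conj_inj (fun j => by have := ha j; have := hb j; omega))

lemma covers_ne {n : ℕ} {l m : Nat.Partition n} {g : ℕ → ℕ} {u : ℕ}
    (hl : ∀ j, g j + dlt u j = conj l j) (hm : ∀ j, g j + dlt u j = conj m j) : l = m :=
  conj_inj (fun j => by have := hl j; have := hm j; omega)

lemma cocovers_ne {n : ℕ} {l m : Nat.Partition n} {σ : ℕ → ℕ} {u : ℕ}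
    (hl : ∀ j, conj l j + dlt u j = σ j) (hm : ∀ j, conj m j + dlt u j = σ j) : l = m :=
  conj_inj (fun j => by have := hl j; have := hm j; omega)

lemma clique_structure {n : ℕ} {s : Finset (Nat.Partition n)}
    (h : (partitionGraph n).IsNClique 7 s) :
    (∃ ν : Nat.Partition (n - 1), ∀ l ∈ s, ∃ a, ∀ j, conj ν j + dlt a j = conj l j) ∨
    (∃ σ : ℕ → ℕ, ∀ l ∈ s, ∃ c, ∀ j, conj l j + dlt c j = σ j) := by
  have hadj : ∀ {x y : Nat.Partition n}, x ∈ s → y ∈ s → x ≠ y → (partitionGraph n).Adj x y :=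
    fun hx hy hne => h.isClique (Finset.mem_coe.mpr hx) (Finset.mem_coe.mpr hy) hne
  obtain ⟨l1, hl1, l2, hl2, hne12⟩ := Finset.one_lt_card.mp (by rw [h.card_eq]; norm_num)
  obtain ⟨ν, a, b, hab, HA, HB⟩ := adj_conj (hadj hl1 hl2 hne12)
  by_cases hP : ∀ m ∈ s, ∃ x, ∀ j, conj ν j + dlt x j = conj m j
  · exact Or.inl ⟨ν, hP⟩
  have hP' : ∃ m3 ∈ s, ¬∃ x, ∀ j, conj ν j + dlt x j = conj m3 j := by
    by_contra hc
    push_neg at hc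
    exact hP (fun m hm => by
      obtain ⟨x, hx⟩ := hc m hm
      exact ⟨x, hx⟩)
  obtain ⟨m3, hm3, hm3n⟩ := hP'
  have hne13 : l1 ≠ m3 := by rintro rfl; exact hm3n ⟨a, HA⟩
  have hne23 : l2 ≠ m3 := by rintro rfl; exact hm3n ⟨b, HB⟩
  obtain ⟨ν13, c, d, hcd, H13c, H13d⟩ := adj_conj (hadj hl1 hm3 hne13)
  obtain ⟨ν23, e, f, hef, H23e, H23f⟩ := adj_conj (hadj hl2 hm3 hne23)
  rcases triangle hab hcd hef HA HB H13c H13d H23e H23f with ⟨w, hw⟩ | ⟨x, y, z, hxy, hs2, hs3⟩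
  · exact absurd ⟨w, hw⟩ hm3n
  right
  have hxz : x ≠ z := by
    rintro rfl
    exact hne13 (conj_inj (fun j => by have := hs3 j; omega))
  refine ⟨fun j => conj l1 j + dlt x j, fun m hm => ?_⟩
  by_cases hml1 : m = l1
  · exact hml1 ▸ ⟨x, fun j => rfl⟩
  by_cases hml2 : m = l2
  · exact hml2 ▸ ⟨y, fun j => (hs2 j).symm⟩
  by_cases hmm3 : m = m3
  · exact hmm3 ▸ ⟨z, fun j => (hs3 j).symm⟩
  obtain ⟨ν1m, a1, b1, hab1, H1a, H1b⟩ := adj_conj (hadj hl1 hm (Ne.symm hml1))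
  obtain ⟨ν2m, a2, b2, hab2, H2a, H2b⟩ := adj_conj (hadj hl2 hm (Ne.symm hml2))
  rcases triangle hab hab1 hab2 HA HB H1a H1b H2a H2b with ⟨w, hw⟩ | ⟨x2, y2, z2, hx2y2, E1, E2⟩
  · -- m covers ν; use triangle (l1, m, m3)
    have haw : a ≠ w := by
      intro hh
      exact hml1 (covers_ne (hh ▸ HA) hw).symm
    obtain ⟨ν3m, a3, b3, hab3, H3a, H3b⟩ := adj_conj (hadj hm hm3 hmm3)
    rcases triangle haw hcd hab3 HA hw H13c H13d H3a H3b with ⟨w', hw'⟩ | ⟨x3, y3, z3, hx3y3, F1, F2⟩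
    · exact absurd ⟨w', hw'⟩ hm3n
    · have hx3z3 : x3 ≠ z3 := by
        rintro rfl
        exact hne13 (conj_inj (fun j => by have := F2 j; omega))
      have hxx3 : x = x3 := uniq_upper' hxz hx3z3 hs3 F2
      subst hxx3
      exact ⟨y3, fun j => (F1 j).symm⟩
  · have hxx2 : x = x2 := uniq_upper' hxy hx2y2 hs2 E1
    subst hxx2
    exact ⟨z2, fun j => (E2 j).symm⟩

lemma step_anti {g : ℕ → ℕ} (hg : ∀ j, g (j + 1) ≤ g j) : ∀ {i k : ℕ}, i ≤ k → g k ≤ g i := by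
  intro i k hik
  induction k with
  | zero =>
    have : i = 0 := by omega
    subst this; exact le_rfl
  | succ k ih =>
    rcases Nat.lt_or_ge i (k+1) with hlt | hge
    · exact le_trans (hg k) (ih (by omega))
    · have : i = k + 1 := by omega
      subst this; exact le_rfl

lemma sum_ge_card (k : ℕ) : ∀ (A : Finset ℕ), (∀ p ∈ A, 1 ≤ p) → A.card = k →
    k * (k + 1) ≤ 2 * ∑ p ∈ A, p := by
  induction k with
  | zero => intro A _ _; simp
  | succ k ih =>
    intro A hpos hcard
    have hne : A.Nonempty := Finset.card_pos.mp (by omega)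
    set M := A.max' hne with hM
    have hMA : M ∈ A := A.max'_mem hne
    have hsub : A ⊆ Finset.Icc 1 M := by
      intro p hp
      exact Finset.mem_Icc.mpr ⟨hpos p hp, A.le_max' p hp⟩
    have hMk : k + 1 ≤ M := by
      have := Finset.card_le_card hsub
      rw [hcard, Nat.card_Icc] at this
      omega
    have hsum : M + ∑ p ∈ A.erase M, p = ∑ p ∈ A, p := Finset.add_sum_erase A id hMA
    have hek : (A.erase M).card = k := by rw [Finset.card_erase_of_mem hMA, hcard]; omega
    have := ih (A.erase M) (fun p hp => hpos p (Finset.mem_of_mem_erase hp)) hek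
    nlinarith

lemma eq_Icc_of_sum (k : ℕ) : ∀ (A : Finset ℕ), (∀ p ∈ A, 1 ≤ p) → A.card = k →
    2 * ∑ p ∈ A, p = k * (k + 1) → A = Finset.Icc 1 k := by
  induction k with
  | zero =>
    intro A _ hcard _
    rw [Finset.card_eq_zero] at hcard
    simp [hcard]
  | succ k ih =>
    intro A hpos hcard hsum
    have hne : A.Nonempty := Finset.card_pos.mp (by omega)
    set M := A.max' hne with hM
    have hMA : M ∈ A := A.max'_mem hne
    have hsub : A ⊆ Finset.Icc 1 M := fun p hp =>
      Finset.mem_Icc.mpr ⟨hpos p hp, A.le_max' p hp⟩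
    have hMk : k + 1 ≤ M := by
      have := Finset.card_le_card hsub
      rw [hcard, Nat.card_Icc] at this
      omega
    have hadd : M + ∑ p ∈ A.erase M, p = ∑ p ∈ A, p := Finset.add_sum_erase A id hMA
    have hek : (A.erase M).card = k := by rw [Finset.card_erase_of_mem hMA, hcard]; omega
    have hge := sum_ge_card k (A.erase M) (fun p hp => hpos p (Finset.mem_of_mem_erase hp)) hek
    have hMeq : M = k + 1 := by nlinarith
    have hesum : 2 * ∑ p ∈ A.erase M, p = k * (k + 1) := by nlinarith
    have hrec := ih (A.erase M) (fun p hp => hpos p (Finset.mem_of_mem_erase hp)) hek hesum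
    have : A = insert M (A.erase M) := (Finset.insert_erase hMA).symm
    rw [this, hrec, hMeq]
    ext q
    simp [Finset.mem_Icc, Finset.mem_insert]
    omega

lemma filter_card_le {g : ℕ → ℕ} (hg : ∀ j, g (j + 1) ≤ g j) {D : Finset ℕ}
    (hD : ∀ p ∈ D, 1 ≤ p ∧ g p + 1 ≤ g (p - 1)) :
    ∀ j, (D.filter (fun p => j < p)).card ≤ g j := by
  suffices H : ∀ m j, (D.filter (fun p => j < p)).card = m → m ≤ g j by
    intro j; exact H _ j rfl
  intro m
  induction m with
  | zero => intro j _; exact Nat.zero_le _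
  | succ m ih =>
    intro j hm
    have hne : (D.filter (fun p => j < p)).Nonempty := Finset.card_pos.mp (by omega)
    set p := (D.filter (fun q => j < q)).min' hne with hp
    have hpmem : p ∈ D.filter (fun q => j < q) := Finset.min'_mem _ _
    have hpD : p ∈ D := (Finset.mem_filter.mp hpmem).1
    have hjp : j < p := (Finset.mem_filter.mp hpmem).2
    have hstep : D.filter (fun q => p < q) = (D.filter (fun q => j < q)).erase p := by
      ext q
      simp only [Finset.mem_erase, Finset.mem_filter]
      constructor
      · rintro ⟨hqD, hq⟩
        exact ⟨by omega, hqD, by omega⟩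
      · rintro ⟨hqp, hqD, hq⟩
        have hle : p ≤ q := Finset.min'_le _ q (Finset.mem_filter.mpr ⟨hqD, hq⟩)
        refine ⟨hqD, by omega⟩
    have hcard : (D.filter (fun q => p < q)).card = m := by
      rw [hstep, Finset.card_erase_of_mem hpmem, hm]; omega
    have h1 : m ≤ g p := ih p hcard
    have h2 := (hD p hpD).2
    have h3 : g (p - 1) ≤ g j := step_anti hg (by omega)
    omega

lemma sum_D_le {g : ℕ → ℕ} (hg : ∀ j, g (j + 1) ≤ g j) {D : Finset ℕ}
    (hD : ∀ p ∈ D, 1 ≤ p ∧ g p + 1 ≤ g (p - 1)) {N : ℕ} (hDN : ∀ p ∈ D, p ≤ N) :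
    ∑ p ∈ D, p ≤ ∑ j ∈ Finset.range N, g j := by
  have h1 : ∀ j, (D.filter (fun p => j < p)).card ≤ g j := filter_card_le hg hD
  calc ∑ p ∈ D, p = ∑ j ∈ Finset.range N, (D.filter (fun p => j < p)).card := by
        rw [Finset.sum_congr rfl (fun j _ => Finset.card_filter _ _)]
        rw [Finset.sum_comm]
        apply Finset.sum_congr rfl
        intro p hp
        have := sum_ind (hDN p hp)
        simpa using this.symm
    _ ≤ ∑ j ∈ Finset.range N, g j := Finset.sum_le_sum (fun j _ => h1 j)

lemma sum_filter_eq {D : Finset ℕ} {N : ℕ} (hDN : ∀ p ∈ D, p ≤ N) :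
    ∑ j ∈ Finset.range N, (D.filter (fun p => j < p)).card = ∑ p ∈ D, p := by
  rw [Finset.sum_congr rfl (fun j _ => Finset.card_filter _ _)]
  rw [Finset.sum_comm]
  apply Finset.sum_congr rfl
  intro p hp
  have := sum_ind (hDN p hp)
  simpa using this

lemma case2_false {n : ℕ} (hn : n ≤ 22) {s : Finset (Nat.Partition n)} (hcard : s.card = 7)
    {σ : ℕ → ℕ} (H : ∀ l ∈ s, ∃ c, ∀ j, conj l j + dlt c j = σ j) : False := by
  classical
  set f : Nat.Partition n → ℕ :=
    fun l => if h : ∃ c, ∀ j, conj l j + dlt c j = σ j then h.choose else 0 with hfdef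
  have hf : ∀ l ∈ s, ∀ j, conj l j + dlt (f l) j = σ j := by
    intro l hl
    have h := H l hl
    simp only [hfdef, dif_pos h]
    exact h.choose_spec
  set C : Finset ℕ := s.image f with hC
  have hCcard : C.card = 7 := by
    rw [hC, Finset.card_image_of_injOn, hcard]
    intro l hl m hm hfl
    exact cocovers_ne (hf l hl) (hfl ▸ hf m hm)
  have hpick : ∀ j j' : ℕ, ∃ c ∈ C, c ≠ j ∧ c ≠ j' := by
    intro j j'
    by_contra hc
    push_neg at hc
    have hsub : C ⊆ {j, j'} := by
      intro c hcC
      have := hc c hcC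
      simp only [Finset.mem_insert, Finset.mem_singleton]
      by_cases h1 : c = j
      · exact Or.inl h1
      · exact Or.inr (this h1)
    have := Finset.card_le_card hsub
    have h2 : ({j, j'} : Finset ℕ).card ≤ 2 :=
      le_trans (Finset.card_insert_le _ _) (by simp)
    omega
  have hanti : ∀ j, σ (j + 1) ≤ σ j := by
    intro j
    obtain ⟨c, hcC, hc1, hc2⟩ := hpick j (j + 1)
    obtain ⟨l, hl, rfl⟩ := Finset.mem_image.mp hcC
    have h1 := hf l hl j
    have h2 := hf l hl (j + 1)
    have h3 := conj_anti l (by omega : j ≤ j + 1)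
    have d1 : dlt (f l) j = 0 := if_neg (fun hh => hc1 hh.symm)
    have d2 : dlt (f l) (j + 1) = 0 := if_neg (fun hh => hc2 hh.symm)
    omega
  have hdesc : ∀ c ∈ C, σ (c + 1) + 1 ≤ σ c := by
    intro c hcC
    obtain ⟨l, hl, rfl⟩ := Finset.mem_image.mp hcC
    have h1 := hf l hl (f l)
    have h2 := hf l hl (f l + 1)
    have h3 := conj_anti l (by omega : f l ≤ f l + 1)
    have d1 : dlt (f l) (f l) = 1 := if_pos rfl
    have d2 : dlt (f l) (f l + 1) = 0 := if_neg (by omega)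
    omega
  have hzero : ∀ j, n ≤ j → σ j = 0 := by
    intro j hj
    obtain ⟨c, hcC, hc1, _⟩ := hpick j j
    obtain ⟨l, hl, rfl⟩ := Finset.mem_image.mp hcC
    have h1 := hf l hl j
    have d1 : dlt (f l) j = 0 := if_neg (fun hh => hc1 hh.symm)
    have h2 := conj_eq_zero l hj
    omega
  have hcn : ∀ c ∈ C, c < n := by
    intro c hcC
    by_contra hge
    have h0 := hzero c (by omega)
    have h0' := hzero (c + 1) (by omega)
    have := hdesc c hcC
    omega
  obtain ⟨l0, hl0⟩ : s.Nonempty := Finset.card_pos.mp (by omega)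
  have hsum : ∑ j ∈ Finset.range n, σ j = n + 1 := by
    have h1 : ∑ j ∈ Finset.range n, conj l0 j = n := sum_conj l0 le_rfl
    have h2 : ∑ j ∈ Finset.range n, dlt (f l0) j = 1 := by
      have hmem : f l0 ∈ Finset.range n :=
        Finset.mem_range.mpr (hcn (f l0) (Finset.mem_image_of_mem f hl0))
      rw [show (fun j => dlt (f l0) j) = fun j => if j = f l0 then 1 else 0 from rfl]
      rw [Finset.sum_ite_eq' (Finset.range n) (f l0) (fun _ => 1), if_pos hmem]
    calc ∑ j ∈ Finset.range n, σ j
        = ∑ j ∈ Finset.range n, (conj l0 j + dlt (f l0) j) :=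
          Finset.sum_congr rfl (fun j _ => (hf l0 hl0 j).symm)
      _ = n + 1 := by rw [Finset.sum_add_distrib, h1, h2]
  set D : Finset ℕ := C.image (· + 1) with hD
  have hDcard : D.card = 7 := by
    rw [hD, Finset.card_image_of_injective _ (add_left_injective 1), hCcard]
  have hDdesc : ∀ p ∈ D, 1 ≤ p ∧ σ p + 1 ≤ σ (p - 1) := by
    intro p hp
    obtain ⟨c, hcC, rfl⟩ := Finset.mem_image.mp hp
    exact ⟨by omega, by simpa using hdesc c hcC⟩
  have hDN : ∀ p ∈ D, p ≤ n := by
    intro p hp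
    obtain ⟨c, hcC, rfl⟩ := Finset.mem_image.mp hp
    have := hcn c hcC
    omega
  have key := sum_D_le hanti hDdesc hDN
  rw [hsum] at key
  have hge := sum_ge_card 7 D (fun p hp => (hDdesc p hp).1) hDcard
  omega

lemma case1_main {n : ℕ} (hn1 : 1 ≤ n) (hn2 : n ≤ 22) {s : Finset (Nat.Partition n)}
    (hcard : s.card = 7) {ν : Nat.Partition (n - 1)}
    (H : ∀ l ∈ s, ∃ a, ∀ j, conj ν j + dlt a j = conj l j) :
    n = 22 ∧ (∀ j, conj ν j = 6 - j) ∧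
      (∀ l ∈ s, ∃ a, a ≤ 6 ∧ ∀ j, conj ν j + dlt a j = conj l j) := by
  classical
  set f : Nat.Partition n → ℕ :=
    fun l => if h : ∃ a, ∀ j, conj ν j + dlt a j = conj l j then h.choose else 0 with hfdef
  have hf : ∀ l ∈ s, ∀ j, conj ν j + dlt (f l) j = conj l j := by
    intro l hl
    have h := H l hl
    simp only [hfdef, dif_pos h]
    exact h.choose_spec
  set C : Finset ℕ := s.image f with hC
  have hCcard : C.card = 7 := by
    rw [hC, Finset.card_image_of_injOn, hcard]
    intro l hl m hm hfl
    exact covers_ne (hf l hl) (hfl ▸ hf m hm)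
  have hanti : ∀ j, conj ν (j + 1) ≤ conj ν j := fun j => conj_anti ν (by omega)
  have hdesc : ∀ a ∈ C, 1 ≤ a → conj ν a + 1 ≤ conj ν (a - 1) := by
    intro a haC ha1
    obtain ⟨l, hl, rfl⟩ := Finset.mem_image.mp haC
    have h1 := hf l hl (f l)
    have h2 := hf l hl (f l - 1)
    have h3 := conj_anti l (by omega : f l - 1 ≤ f l)
    have d1 : dlt (f l) (f l) = 1 := if_pos rfl
    have d2 : dlt (f l) (f l - 1) = 0 := if_neg (by omega)
    omega
  set D : Finset ℕ := C.erase 0 with hD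
  have hDdesc : ∀ p ∈ D, 1 ≤ p ∧ conj ν p + 1 ≤ conj ν (p - 1) := by
    intro p hp
    have h1 : p ≠ 0 := (Finset.mem_erase.mp hp).1
    have h2 : p ∈ C := (Finset.mem_erase.mp hp).2
    exact ⟨by omega, hdesc p h2 (by omega)⟩
  have hDN : ∀ p ∈ D, p ≤ n - 1 := by
    intro p hp
    by_contra hgt
    have h2 := (hDdesc p hp).2
    have h0 : conj ν (p - 1) = 0 := conj_eq_zero ν (by omega)
    omega
  have hsum : ∑ j ∈ Finset.range (n - 1), conj ν j = n - 1 := sum_conj ν le_rfl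
  have key : ∑ p ∈ D, p ≤ n - 1 := by
    have := sum_D_le hanti hDdesc hDN
    omega
  have h0C : (0 : ℕ) ∈ C := by
    by_contra h0
    have hDC : D = C := Finset.erase_eq_of_notMem h0
    have hge := sum_ge_card 7 D (fun p hp => (hDdesc p hp).1) (by rw [hDC, hCcard])
    omega
  have hDcard : D.card = 6 := by
    rw [hD, Finset.card_erase_of_mem h0C, hCcard]
  have hge := sum_ge_card 6 D (fun p hp => (hDdesc p hp).1) hDcard
  have hn22 : n = 22 := by omega
  subst hn22
  have hsumD : 2 * ∑ p ∈ D, p = 6 * 7 := by omega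
  have hDeq : D = Finset.Icc 1 6 := eq_Icc_of_sum 6 D (fun p hp => (hDdesc p hp).1) hDcard (by omega)
  -- pointwise determination of conj ν
  have hle : ∀ j ∈ Finset.range 21, (D.filter (fun p => j < p)).card ≤ conj ν j :=
    fun j _ => filter_card_le hanti hDdesc j
  have hsumf : ∑ j ∈ Finset.range 21, (D.filter (fun p => j < p)).card = 21 := by
    rw [sum_filter_eq (fun p hp => le_trans (hDN p hp) (by omega))]
    omega
  have hpt : ∀ j ∈ Finset.range 21, (D.filter (fun p => j < p)).card = conj ν j := by
    have := (Finset.sum_eq_sum_iff_of_le hle).mp (by rw [hsumf]; exact (by simpa using hsum.symm))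
    exact this
  have hgval : ∀ j, conj ν j = 6 - j := by
    intro j
    rcases Nat.lt_or_ge j 21 with hj | hj
    · have h1 := hpt j (Finset.mem_range.mpr hj)
      rw [hDeq] at h1
      have h2 : (Finset.Icc 1 6).filter (fun p => j < p) = Finset.Icc (j + 1) 6 := by
        ext q
        simp only [Finset.mem_filter, Finset.mem_Icc]
        omega
      rw [h2, Nat.card_Icc] at h1
      omega
    · have := conj_eq_zero ν (by omega : 22 - 1 ≤ j)
      omega
  refine ⟨rfl, hgval, fun l hl => ⟨f l, ?_, hf l hl⟩⟩
  have hfC : f l ∈ C := Finset.mem_image_of_mem f hl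
  by_cases h0 : f l = 0
  · omega
  · have : f l ∈ D := Finset.mem_erase.mpr ⟨h0, hfC⟩
    rw [hDeq] at this
    have := Finset.mem_Icc.mp this
    omega

def Pparts : ℕ → Multiset ℕ
  | 0 => {1, 1, 2, 3, 4, 5, 6}
  | 1 => {2, 2, 3, 4, 5, 6}
  | 2 => {1, 3, 3, 4, 5, 6}
  | 3 => {1, 2, 4, 4, 5, 6}
  | 4 => {1, 2, 3, 5, 5, 6}
  | 5 => {1, 2, 3, 4, 6, 6}
  | 6 => {1, 2, 3, 4, 5, 7}
  | _ => {22}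

def P (a : ℕ) : Nat.Partition 22 where
  parts := Pparts a
  parts_pos := by
    intro i hi
    rcases a with _|_|_|_|_|_|_|b
    · exact (by decide : ∀ i ∈ ({1,1,2,3,4,5,6} : Multiset ℕ), 0 < i) i hi
    · exact (by decide : ∀ i ∈ ({2,2,3,4,5,6} : Multiset ℕ), 0 < i) i hi
    · exact (by decide : ∀ i ∈ ({1,3,3,4,5,6} : Multiset ℕ), 0 < i) i hi
    · exact (by decide : ∀ i ∈ ({1,2,4,4,5,6} : Multiset ℕ), 0 < i) i hi
    · exact (by decide : ∀ i ∈ ({1,2,3,5,5,6} : Multiset ℕ), 0 < i) i hi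
    · exact (by decide : ∀ i ∈ ({1,2,3,4,6,6} : Multiset ℕ), 0 < i) i hi
    · exact (by decide : ∀ i ∈ ({1,2,3,4,5,7} : Multiset ℕ), 0 < i) i hi
    · exact (by decide : ∀ i ∈ ({22} : Multiset ℕ), 0 < i) i hi
  parts_sum := by
    rcases a with _|_|_|_|_|_|_|b
    · exact (by decide : ({1,1,2,3,4,5,6} : Multiset ℕ).sum = 22)
    · exact (by decide : ({2,2,3,4,5,6} : Multiset ℕ).sum = 22)
    · exact (by decide : ({1,3,3,4,5,6} : Multiset ℕ).sum = 22)
    · exact (by decide : ({1,2,4,4,5,6} : Multiset ℕ).sum = 22)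
    · exact (by decide : ({1,2,3,5,5,6} : Multiset ℕ).sum = 22)
    · exact (by decide : ({1,2,3,4,6,6} : Multiset ℕ).sum = 22)
    · exact (by decide : ({1,2,3,4,5,7} : Multiset ℕ).sum = 22)
    · exact (by decide : ({22} : Multiset ℕ).sum = 22)

def nu0 : Nat.Partition 21 where
  parts := {1, 2, 3, 4, 5, 6}
  parts_pos := by decide
  parts_sum := by decide

lemma stepP : ∀ a, a ≤ 6 → stepDown (P a) nu0 := by
  intro a ha
  interval_cases a
  · exact ⟨1, by decide, by decide⟩
  · exact ⟨2, by decide, by decide⟩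
  · exact ⟨3, by decide, by decide⟩
  · exact ⟨4, by decide, by decide⟩
  · exact ⟨5, by decide, by decide⟩
  · exact ⟨6, by decide, by decide⟩
  · exact ⟨7, by decide, by decide⟩

lemma conj_P : ∀ a, a ≤ 6 → ∀ j, conj (P a) j = (6 - j) + dlt a j := by
  intro a ha j
  interval_cases a <;>
  · simp only [conj, P, Pparts, dlt, Multiset.insert_eq_cons, Multiset.countP_cons,
      Multiset.countP_zero, show ∀ x : ℕ, ({x} : Multiset ℕ) = x ::ₘ 0 from fun _ => rfl]
    split_ifs <;> omega

lemma P_inj : ∀ a, a ≤ 6 → ∀ b, b ≤ 6 → P a = P b → a = b := by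
  intro a ha b hb h
  have h1 := conj_P a ha a
  have h2 := conj_P b hb a
  rw [h] at h1
  have d1 : dlt a a = 1 := if_pos rfl
  by_contra hne
  have d2 : dlt b a = 0 := if_neg hne
  omega

def S0 : Finset (Nat.Partition 22) := (Finset.range 7).image P

lemma S0_card : S0.card = 7 := by
  rw [S0, Finset.card_image_of_injOn, Finset.card_range]
  intro a ha b hb h
  have ha' := Finset.mem_range.mp ha
  have hb' := Finset.mem_range.mp hb
  exact P_inj a (by omega) b (by omega) h

lemma S0_clique : (partitionGraph 22).IsNClique 7 S0 := by
  constructor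
  · intro x hx y hy hne
    obtain ⟨a, ha, rfl⟩ := Finset.mem_image.mp hx
    obtain ⟨b, hb, rfl⟩ := Finset.mem_image.mp hy
    have ha' := Finset.mem_range.mp ha
    have hb' := Finset.mem_range.mp hb
    exact ⟨hne, nu0, ⟨stepP a (by omega), stepP b (by omega)⟩⟩
  · exact S0_card

lemma no_clique {n : ℕ} (hn1 : 1 ≤ n) (hn2 : n ≤ 21) {s : Finset (Nat.Partition n)}
    (hs : (partitionGraph n).IsNClique 7 s) : False := by
  rcases clique_structure hs with ⟨ν, H⟩ | ⟨σ, H⟩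
  · have := (case1_main hn1 (by omega) hs.card_eq H).1
    omega
  · exact case2_false (by omega) hs.card_eq H

lemma clique22 {s : Finset (Nat.Partition 22)} (hs : (partitionGraph 22).IsNClique 7 s) :
    s = S0 := by
  rcases clique_structure hs with ⟨ν, H⟩ | ⟨σ, H⟩
  · obtain ⟨-, hg, hpos⟩ := case1_main (by omega) le_rfl hs.card_eq H
    have hsub : s ⊆ S0 := by
      intro l hl
      obtain ⟨a, ha6, hfa⟩ := hpos l hl
      have hlP : l = P a := by
        apply conj_inj
        intro j
        have h1 := hfa j
        have h2 := hg j
        have h3 := conj_P a ha6 j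
        omega
      exact Finset.mem_image.mpr ⟨a, Finset.mem_range.mpr (by omega), hlP.symm⟩
    exact Finset.eq_of_subset_of_card_le hsub (by rw [hs.card_eq, S0_card])
  · exact (case2_false le_rfl hs.card_eq H).elim

end PG

theorem stmt7 :
    (∀ n : ℕ, 1 ≤ n → n ≤ 21 → cliqueCount n 7 = 0) ∧ cliqueCount 22 7 = 1 := by
  constructor
  · intro n h1 h2
    have hempty : {s : Finset (Nat.Partition n) | (partitionGraph n).IsNClique 7 s} = ∅ := by
      ext s
      simp only [Set.mem_setOf_eq, Set.mem_empty_iff_false, iff_false]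
      intro hs
      exact PG.no_clique h1 h2 hs
    rw [cliqueCount, hempty, Set.ncard_empty]
  · have huniq : {s : Finset (Nat.Partition 22) | (partitionGraph 22).IsNClique 7 s} = {PG.S0} := by
      ext s
      simp only [Set.mem_setOf_eq, Set.mem_singleton_iff]
      constructor
      · exact PG.clique22
      · rintro rfl
        exact PG.S0_clique
    rw [cliqueCount, huniq, Set.ncard_singleton]
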